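/- Let n ≥ 2. For each ordered pair (i, j) with i ≠ j in Fin n, define the hopping matrix T_{ij} : Matrix (Fin n → Bool) (Fin n → Bool) ℂ whose (f, g) entry equals 1 if g i = true, g j = false, and f = Function.update (Function.update g i false) j true, and equals 0 otherwise (T_{ij} is σ_i⁻ σ_j⁺, lowering qubit i and raising qubit j). Let H = Σ_{i ≠ j} T_{ij}. For k : Fin n let w_k : (Fin n → Bool) → ℂ be the standard basis vector supported on the one-hot string that is true exactly at coordinate k. Then H *ᵥ w_k = Σ_{j ≠ k} w_j for every k; consequently the linear span of {w_0, …, w_{n−1}} is invariant under H, and in the basis (w_k) the restriction of H to this span is the adjacency matrix A(K_n) of the complete graph (A i j = 0 if i = j, 1 otherwise). -/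

import Mathlib

open Matrix

/-- The ladder-operator XY mixer `H = ∑_{i ≠ j} σᵢ⁻ σⱼ⁺` maps the one-hot basis
vector `w_k` to `∑_{j ≠ k} w_j`; hence the one-excitation subspace is invariant
and the restriction of `H` in the basis `(w_k)` is the adjacency matrix of the
complete graph `K_n`. -/
theorem xy_mixer_restricts_to_complete_graph (n : ℕ) (hn : 2 ≤ n)
    (T : Fin n → Fin n → Matrix (Fin n → Bool) (Fin n → Bool) ℂ)
    (hT : ∀ i j, i ≠ j → ∀ f g, T i j f g =
      if g i = true ∧ g j = false ∧
          f = Function.update (Function.update g i false) j true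
      then 1 else 0)
    (H : Matrix (Fin n → Bool) (Fin n → Bool) ℂ)
    (hH : H = ∑ i, ∑ j ∈ Finset.univ.filter (· ≠ i), T i j)
    (w : Fin n → (Fin n → Bool) → ℂ)
    (hw : ∀ k, w k = Pi.single (fun t => decide (t = k)) 1) :
    (∀ k, H *ᵥ w k = ∑ j ∈ Finset.univ.filter (· ≠ k), w j) ∧
    (∀ v ∈ Submodule.span ℂ (Set.range w),
        H *ᵥ v ∈ Submodule.span ℂ (Set.range w)) ∧
    (∀ k, H *ᵥ w k = ∑ j, (if j = k then (0 : ℂ) else 1) • w j) := by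
  have hkey : ∀ k, H *ᵥ w k = ∑ j ∈ Finset.univ.filter (· ≠ k), w j := by
    intro k
    funext f
    have hupd : ∀ j : Fin n, j ≠ k →
        Function.update (Function.update (fun t : Fin n => decide (t = k)) k false)
          j true = fun t => decide (t = j) := by
      intro j hj
      funext t
      by_cases ht : t = j
      · subst ht; simp [Function.update]
      · by_cases htk : t = k <;>
          simp [Function.update, ht, htk, fun h : j = k => hj h]
    rw [hw k, Matrix.mulVec_single_one, hH]
    simp only [Matrix.col_apply, Matrix.sum_apply, mul_one]
    rw [Fintype.sum_eq_single k]
    · have h1 : ∀ j ∈ Finset.univ.filter (· ≠ k),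
          T k j f (fun t : Fin n => decide (t = k))
            = if f = (fun t : Fin n => decide (t = j)) then (1 : ℂ) else 0 := by
        intro j hj
        have hj' : j ≠ k := by simpa using hj
        rw [hT k j (fun h => hj' h.symm)]
        simp [hupd j hj', hj']
      rw [Finset.sum_congr rfl h1]
      have h2 : ∀ j ∈ Finset.univ.filter (· ≠ k),
          w j f = if f = (fun t : Fin n => decide (t = j)) then (1 : ℂ) else 0 := by
        intro j _
        rw [hw j, Pi.single_apply]
      rw [← Finset.sum_congr rfl h2]
      simp
    · intro i hi
      apply Finset.sum_eq_zero
      intro j hj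
      have hj' : j ≠ i := by simpa using hj
      rw [hT i j (fun h => hj' h.symm)]
      simp [hi]
  refine ⟨hkey, ?_, ?_⟩
  · intro v hv
    induction hv using Submodule.span_induction with
    | mem x hx =>
        obtain ⟨k, rfl⟩ := hx
        rw [hkey]
        exact Submodule.sum_mem _ fun j _ =>
          Submodule.subset_span (Set.mem_range_self j)
    | zero => rw [Matrix.mulVec_zero]; exact Submodule.zero_mem _
    | add x y _ _ hx hy => rw [Matrix.mulVec_add]; exact Submodule.add_mem _ hx hy
    | smul c x _ hx => rw [Matrix.mulVec_smul]; exact Submodule.smul_mem _ _ hx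
  · intro k
    rw [hkey, Finset.sum_filter]
    refine Finset.sum_congr rfl fun j _ => ?_
    by_cases h : j = k <;> simp [h]
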